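/- For any graph G, the 2-rainbow domination number of G equals the domination number of the Cartesian product of G with K₂. -/

import Mathlib

open Finset

/-- A `k`-rainbow dominating function: every vertex assigned `∅` sees all `k` colors
among its neighbors. -/
def SimpleGraph.IsRainbowDF {V : Type*} {k : ℕ} (G : SimpleGraph V)
    (f : V → Finset (Fin k)) : Prop :=
  ∀ v, f v = ∅ → ∀ c : Fin k, ∃ u, G.Adj v u ∧ c ∈ f u

/-- The `k`-rainbow domination number. -/
noncomputable def SimpleGraph.rainbowNum {V : Type*} [Fintype V] (G : SimpleGraph V)
    (k : ℕ) : ℕ :=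
  sInf {w | ∃ f : V → Finset (Fin k), G.IsRainbowDF f ∧ w = ∑ v, (f v).card}

/-- `S` is a dominating set of `G`. -/
def SimpleGraph.IsDomSet {V : Type*} (G : SimpleGraph V) (S : Set V) : Prop :=
  ∀ v, v ∉ S → ∃ u ∈ S, G.Adj v u

/-- The domination number. -/
noncomputable def SimpleGraph.domNum {V : Type*} [Fintype V] (G : SimpleGraph V) : ℕ :=
  sInf {n | ∃ S : Finset V, G.IsDomSet ↑S ∧ n = S.card}

/-- The 2-rainbow domination number of `G` equals the domination number of `G □ K₂`. -/
theorem rainbow2_eq_domNum_boxProd_K2 {V : Type*} [Fintype V] (G : SimpleGraph V) :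
    G.rainbowNum 2 = (G.boxProd (⊤ : SimpleGraph (Fin 2))).domNum := by
  classical
  unfold SimpleGraph.rainbowNum SimpleGraph.domNum
  congr 1
  ext w
  constructor
  · rintro ⟨f, hf, rfl⟩
    refine ⟨Finset.univ.filter (fun p : V × Fin 2 => p.2 ∈ f p.1), ?_, ?_⟩
    · intro p hp
      simp only [Finset.coe_filter, Set.mem_setOf_eq, Finset.mem_coe,
        Finset.mem_filter, Finset.mem_univ, true_and] at hp
      obtain ⟨v, c⟩ := p
      by_cases h : f v = ∅
      · obtain ⟨u, hadj, hcu⟩ := hf v h c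
        exact ⟨(u, c), by simp [hcu], by simp [SimpleGraph.boxProd_adj, hadj]⟩
      · obtain ⟨c', hc'⟩ := Finset.nonempty_iff_ne_empty.mpr h
        refine ⟨(v, c'), by simp [hc'], ?_⟩
        refine SimpleGraph.boxProd_adj.mpr (Or.inr ⟨?_, rfl⟩)
        simp only [SimpleGraph.top_adj]
        exact fun e => hp (by rw [e]; exact hc')
    · rw [Finset.card_eq_sum_card_fiberwise (f := Prod.fst)
        (t := (Finset.univ : Finset V)) (fun _ _ => Finset.mem_univ _)]
      refine Finset.sum_congr rfl fun v _ => ?_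
      rw [← Finset.card_map (s := f v) ⟨fun c => (v, c), fun a b h => by simpa using h⟩]
      congr 1
      ext p
      obtain ⟨v', c⟩ := p
      simp only [Finset.mem_filter, Finset.mem_univ, true_and,
        Finset.mem_map, Function.Embedding.coeFn_mk, Prod.mk.injEq]
      change (∃ a ∈ f v, (v, a) = (v', c)) ↔ _
      aesop
  · rintro ⟨S, hS, rfl⟩
    refine ⟨fun v => (S.filter (fun p => p.1 = v)).image Prod.snd, ?_, ?_⟩
    · intro v hv c
      have hvc : ∀ d : Fin 2, (v, d) ∉ S := by
        intro d hd
        have : d ∈ (S.filter (fun p => p.1 = v)).image Prod.snd := by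
          exact Finset.mem_image.mpr ⟨(v, d), Finset.mem_filter.mpr ⟨hd, rfl⟩, rfl⟩
        simp [hv] at this
      obtain ⟨⟨u, d⟩, huS, hadj⟩ := hS (v, c) (by simpa using hvc c)
      simp only [Finset.mem_coe] at huS
      rcases SimpleGraph.boxProd_adj.mp hadj with ⟨h1, h2⟩ | ⟨h1, h2⟩
      · refine ⟨u, h1, ?_⟩
        subst h2
        exact Finset.mem_image.mpr ⟨(u, c), Finset.mem_filter.mpr ⟨huS, rfl⟩, rfl⟩
      · simp only [] at h2
        rw [← h2] at huS
        exact absurd huS (hvc d)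
    · rw [Finset.card_eq_sum_card_fiberwise (f := Prod.fst)
        (t := (Finset.univ : Finset V)) (fun _ _ => Finset.mem_univ _)]
      refine Finset.sum_congr rfl fun v _ => ?_
      rw [Finset.card_image_of_injOn]
      intro p hp q hq h
      simp only [Finset.mem_coe, Finset.mem_filter] at hp hq
      exact Prod.ext (hp.2.trans hq.2.symm) h
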